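/- If m balls are thrown independently and uniformly at random into n bins, and X denotes the number of nonempty bins, then E[X] ≥ min{m/2, 3n/10}. -/

import Mathlib

/-- The number of nonempty bins after throwing `m` balls into `n` bins according to `f`. -/
def nonemptyBins {m n : ℕ} (f : Fin m → Fin n) : ℕ :=
  (Finset.univ.image f).card

lemma count_avoid (m n : ℕ) (b : Fin n) :
    (Finset.univ.filter (fun f : Fin m → Fin n => ∀ i, f i ≠ b)).card = (n-1)^m := by
  have : (Finset.univ.filter (fun f : Fin m → Fin n => ∀ i, f i ≠ b))
      = Fintype.piFinset (fun _ : Fin m => Finset.univ.erase b) := by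
    ext f
    simp [Fintype.mem_piFinset, Finset.mem_erase]
  rw [this, Fintype.card_piFinset]
  simp [Finset.card_erase_of_mem]

lemma count_hit (m n : ℕ) (b : Fin n) :
    (Finset.univ.filter (fun f : Fin m → Fin n => ∃ i, f i = b)).card = n^m - (n-1)^m := by
  have h := Finset.card_filter_add_card_filter_not
    (s := (Finset.univ : Finset (Fin m → Fin n))) (p := fun f => ∃ i, f i = b)
  have hc : (Finset.univ : Finset (Fin m → Fin n)).card = n^m := by
    simp [Finset.card_univ]
  have hneg : (Finset.univ.filter (fun f : Fin m → Fin n => ¬ ∃ i, f i = b)).card = (n-1)^m := by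
    rw [← count_avoid m n b]
    congr 1
    ext f
    simp
  rw [hc] at h
  rw [show (Finset.univ.filter (fun f : Fin m → Fin n => ¬ ∃ i, f i = b)).card = (n-1)^m from hneg] at h
  exact Nat.eq_sub_of_add_eq h

lemma sum_nonemptyBins (m n : ℕ) :
    ∑ f : Fin m → Fin n, nonemptyBins f = n * (n^m - (n-1)^m) := by
  have h1 : ∀ f : Fin m → Fin n, nonemptyBins f
      = ∑ b : Fin n, if ∃ i, f i = b then 1 else 0 := by
    intro f
    rw [← Finset.card_filter]
    unfold nonemptyBins
    congr 1
    ext b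
    simp [eq_comm]
  calc ∑ f : Fin m → Fin n, nonemptyBins f
      = ∑ f : Fin m → Fin n, ∑ b : Fin n, if ∃ i, f i = b then 1 else 0 := by
        exact Finset.sum_congr rfl (fun f _ => h1 f)
    _ = ∑ b : Fin n, ∑ f : Fin m → Fin n, if ∃ i, f i = b then 1 else 0 := Finset.sum_comm
    _ = ∑ b : Fin n, (n^m - (n-1)^m) := by
        refine Finset.sum_congr rfl (fun b _ => ?_)
        rw [← Finset.card_filter, count_hit]
    _ = n * (n^m - (n-1)^m) := by simp

/-- Expected number of nonempty bins when `m` balls are thrown independently and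
uniformly at random into `n` bins. -/
noncomputable def expNonempty (m n : ℕ) : ℝ :=
  ∑ f : Fin m → Fin n, (1 / (n : ℝ) ^ m) * (nonemptyBins f : ℝ)

lemma key_ineq (m n : ℕ) (hn : 1 ≤ n) :
    min ((m : ℝ) / 2) (3 * (n : ℝ) / 10) ≤ (n : ℝ) * (1 - (((n : ℝ) - 1) / n) ^ m) := by
  have hN : (1 : ℝ) ≤ (n : ℝ) := by exact_mod_cast hn
  have hN0 : (0 : ℝ) < n := by linarith
  set x : ℝ := 1 / n with hxdef
  have hx0 : 0 < x := by positivity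
  have hx1 : x ≤ 1 := by rw [hxdef]; rw [div_le_one hN0]; exact hN
  have h1 : 1 + (m : ℝ) * x ≤ (1 + x) ^ m := one_add_mul_le_pow (by linarith) m
  have h2 : (1 - x) ^ m * (1 + x) ^ m = (1 - x ^ 2) ^ m := by rw [← mul_pow]; ring_nf
  have h3 : (1 - x ^ 2) ^ m ≤ 1 := pow_le_one₀ (by nlinarith) (by nlinarith)
  have h0 : (0 : ℝ) ≤ (1 - x) ^ m := pow_nonneg (by linarith) m
  have hb : (1 - x) ^ m * (1 + (m : ℝ) * x) ≤ 1 := by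
    calc (1 - x) ^ m * (1 + (m : ℝ) * x) ≤ (1 - x) ^ m * (1 + x) ^ m :=
          mul_le_mul_of_nonneg_left h1 h0
      _ = (1 - x ^ 2) ^ m := h2
      _ ≤ 1 := h3
  have hpos : (0 : ℝ) < 1 + (m : ℝ) * x := by positivity
  have h4 : (1 - x) ^ m ≤ 1 / (1 + (m : ℝ) * x) := by
    rw [le_div_iff₀ hpos]; exact hb
  have hrw : ((n : ℝ) - 1) / n = 1 - x := by
    rw [hxdef]; field_simp
  rw [hrw]
  have h5 : (n : ℝ) * ((m : ℝ) * x / (1 + (m : ℝ) * x)) ≤ (n : ℝ) * (1 - (1 - x) ^ m) := by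
    apply mul_le_mul_of_nonneg_left _ (le_of_lt hN0)
    have : 1 - 1 / (1 + (m : ℝ) * x) ≤ 1 - (1 - x) ^ m := by linarith
    calc (m : ℝ) * x / (1 + (m : ℝ) * x) = 1 - 1 / (1 + (m : ℝ) * x) := by
          field_simp
          ring
      _ ≤ 1 - (1 - x) ^ m := this
  have hval : (n : ℝ) * ((m : ℝ) * x / (1 + (m : ℝ) * x)) = (n : ℝ) * m / (n + m) := by
    rw [hxdef]
    have : (n : ℝ) + m ≠ 0 := by positivity
    field_simp
  rw [hval] at h5
  refine le_trans ?_ h5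
  have hnm : (0 : ℝ) < (n : ℝ) + m := by positivity
  rcases le_total (m : ℝ) (n : ℝ) with h | h
  · refine le_trans (min_le_left _ _) ?_
    rw [div_le_div_iff₀ (by norm_num) hnm]
    nlinarith
  · refine le_trans (min_le_right _ _) ?_
    rw [div_le_div_iff₀ (by norm_num) hnm]
    nlinarith

/-- If `m` balls are thrown uniformly at random into `n` bins and `X` is the number of
nonempty bins, then `E[X] ≥ min {m/2, 3n/10}`. -/
theorem expNonempty_ge_min (m n : ℕ) (hn : 1 ≤ n) :
    min ((m : ℝ) / 2) (3 * (n : ℝ) / 10) ≤ expNonempty m n := by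
  have hple : (n - 1) ^ m ≤ n ^ m := Nat.pow_le_pow_left (Nat.sub_le n 1) m
  have hN0 : (0 : ℝ) < n := by exact_mod_cast hn
  have hNm : (0 : ℝ) < (n : ℝ) ^ m := by positivity
  have hcast : ((n - 1 : ℕ) : ℝ) = (n : ℝ) - 1 := by
    have := Nat.cast_sub hn (R := ℝ); simpa using this
  have hE : expNonempty m n = (n : ℝ) * (1 - (((n : ℝ) - 1) / n) ^ m) := by
    unfold expNonempty
    rw [← Finset.mul_sum, ← Nat.cast_sum, sum_nonemptyBins]
    rw [Nat.cast_mul, Nat.cast_sub hple, Nat.cast_pow, Nat.cast_pow, hcast]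
    rw [div_pow]
    field_simp
  rw [hE]
  exact key_ineq m n hn
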